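/- Let A ≥ 1 be an integer and η > 0. Let ψ(x) := (1/η) Σ_a log(1/x(a)) and D_ψ(x,x') := (1/η) Σ_a [ log(x'(a)/x(a)) + x(a)/x'(a) − 1 ] on vectors with positive coordinates, and let Δ_A⁺ be the set of probability vectors in ℝ^A with all coordinates positive. Let π' ∈ Δ_A⁺ and β₁, β₂ ∈ ℝ^A. Suppose π ∈ Δ_A⁺ minimizes F(x) := ⟨x, −β₁⟩ + D_ψ(x, π') over Δ_A⁺, π'' ∈ Δ_A⁺ minimizes G(x) := ⟨x, −β₂⟩ + D_ψ(x, π') over Δ_A⁺, and (1/2)·π(a) ≤ π''(a) ≤ 2·π(a) for every coordinate a. Then ⟨π − π'', β₁ − β₂⟩ ≤ 8 η Σ_a π(a)² (β₁(a) − β₂(a))². -/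

import Mathlib

open Finset

private lemma lb_h_upper (t : ℝ) (ht : 1/2 ≤ t) : t - 1 - Real.log t ≤ 2*(t-1)^2 := by
  have ht0 : (0:ℝ) < t := by linarith
  have h1 : Real.log t⁻¹ ≤ t⁻¹ - 1 := Real.log_le_sub_one_of_pos (by positivity)
  rw [Real.log_inv] at h1
  have h3 : t * t⁻¹ = 1 := mul_inv_cancel₀ (ne_of_gt ht0)
  nlinarith [sq_nonneg (t-1)]

private lemma lb_h_lower (t : ℝ) (ht0 : 0 < t) (ht2 : t ≤ 2) :
    (t-1)^2/8 ≤ t - 1 - Real.log t := by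
  set u := Real.sqrt t with hu
  have hu0 : 0 ≤ u := Real.sqrt_nonneg t
  have hut : u^2 = t := Real.sq_sqrt ht0.le
  have hlog : Real.log t = 2 * Real.log u := by
    rw [hu, Real.log_sqrt ht0.le]; ring
  have h1 : Real.log u ≤ u - 1 := Real.log_le_sub_one_of_pos (by positivity)
  have hu2 : u ≤ 3/2 := by nlinarith
  nlinarith [sq_nonneg (u-1)]

set_option maxHeartbeats 1000000 in
/-- Bound on the optimistic-prediction term of online mirror descent with the
log-barrier regularizer: `⟨π - π'', β₁ - β₂⟩ ≤ 8η Σ_a π(a)² (β₁(a) - β₂(a))²`. -/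
theorem log_barrier_prediction_term_bound
    (A : ℕ) (hA : 1 ≤ A) (η : ℝ) (hη : 0 < η)
    (D : (Fin A → ℝ) → (Fin A → ℝ) → ℝ)
    (hD : ∀ x x', D x x' =
      (1 / η) * ∑ a, (Real.log (x' a / x a) + x a / x' a - 1))
    (πp π π'' : Fin A → ℝ) (β₁ β₂ : Fin A → ℝ)
    (hπp : (∀ a, 0 < πp a) ∧ ∑ a, πp a = 1)
    (hπ : (∀ a, 0 < π a) ∧ ∑ a, π a = 1)
    (hπ'' : (∀ a, 0 < π'' a) ∧ ∑ a, π'' a = 1)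
    (hminF : ∀ x : Fin A → ℝ, (∀ a, 0 < x a) → ∑ a, x a = 1 →
      (∑ a, π a * (-(β₁ a))) + D π πp ≤ (∑ a, x a * (-(β₁ a))) + D x πp)
    (hminG : ∀ x : Fin A → ℝ, (∀ a, 0 < x a) → ∑ a, x a = 1 →
      (∑ a, π'' a * (-(β₂ a))) + D π'' πp ≤ (∑ a, x a * (-(β₂ a))) + D x πp)
    (hsand : ∀ a, (1 / 2) * π a ≤ π'' a ∧ π'' a ≤ 2 * π a) :
    ∑ a, (π a - π'' a) * (β₁ a - β₂ a) ≤
      8 * η * ∑ a, (π a) ^ 2 * (β₁ a - β₂ a) ^ 2 := by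
  obtain ⟨hπp1, hπp2⟩ := hπp
  obtain ⟨hπ1, hπ2⟩ := hπ
  obtain ⟨hπ''1, hπ''2⟩ := hπ''
  set c : Fin A → ℝ := fun a => (1/η) * (1/πp a - 1/π a) with hc
  -- three-point identity
  have tpi : ∀ x : Fin A → ℝ, (∀ a, 0 < x a) →
      D x πp = D x π + D π πp + ∑ a, (x a - π a) * c a := by
    intro x hx
    rw [hD x πp, hD x π, hD π πp, Finset.mul_sum, Finset.mul_sum, Finset.mul_sum,
      ← Finset.sum_add_distrib, ← Finset.sum_add_distrib]
    refine Finset.sum_congr rfl fun a _ => ?_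
    have hxa := (hx a).ne'
    have hpa := (hπ1 a).ne'
    have hppa := (hπp1 a).ne'
    have hηne := hη.ne'
    have l1 : Real.log (πp a / x a) = Real.log (π a / x a) + Real.log (πp a / π a) := by
      rw [Real.log_div hppa hxa, Real.log_div hpa hxa, Real.log_div hppa hpa]; ring
    simp only [hc]
    rw [l1]
    field_simp
    ring
  set L : ℝ := ∑ a, (π'' a - π a) * (c a - β₁ a) with hL
  set U : ℝ := ∑ a, ((π a - π'' a)/π a)^2 with hU
  set V : ℝ := ∑ a, (π a) ^ 2 * (β₁ a - β₂ a) ^ 2 with hV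
  have hU0 : 0 ≤ U := Finset.sum_nonneg fun a _ => sq_nonneg _
  have hV0 : 0 ≤ V := Finset.sum_nonneg fun a _ => by positivity
  set M : ℝ := (2/η) * U with hM
  have hM0 : 0 ≤ M := by positivity
  -- perturbation inequality
  have hlam : ∀ l : ℝ, 0 < l → l ≤ 1 → -(l*M) ≤ L := by
    intro l hl0 hl1
    set xl : Fin A → ℝ := fun a => π a + l*(π'' a - π a) with hxl
    have hxlhalf : ∀ a, π a / 2 ≤ xl a := by
      intro a
      have h2 := (hsand a).1
      have h3 := hπ1 a
      simp only [hxl]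
      nlinarith
    have hxlpos : ∀ a, 0 < xl a := fun a => lt_of_lt_of_le (by linarith [hπ1 a]) (hxlhalf a)
    have hxlsum : ∑ a, xl a = 1 := by
      simp only [hxl]
      rw [Finset.sum_add_distrib, ← Finset.mul_sum, Finset.sum_sub_distrib, hπ''2, hπ2]
      ring
    have h1 := hminF xl hxlpos hxlsum
    rw [tpi xl hxlpos] at h1
    have e1 : (∑ a, xl a * (-(β₁ a))) - (∑ a, π a * (-(β₁ a)))
        + ∑ a, (xl a - π a) * c a = l * L := by
      rw [hL, Finset.mul_sum, ← Finset.sum_sub_distrib, ← Finset.sum_add_distrib]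
      refine Finset.sum_congr rfl fun a _ => ?_
      simp only [hxl]; ring
    have hDxl : D xl π ≤ l^2 * M := by
      rw [hD]
      have hsum : ∑ a, (Real.log (π a / xl a) + xl a / π a - 1)
          ≤ ∑ a, 2 * l^2 * ((π a - π'' a)/π a)^2 := by
        refine Finset.sum_le_sum fun a _ => ?_
        have hpa := hπ1 a
        have hxla := hxlpos a
        set t : ℝ := xl a / π a with htd
        have ht1 : t - 1 = -(l * ((π a - π'' a)/π a)) := by
          field_simp [htd, hxl]; rw [htd, sub_mul, div_mul_cancel₀ _ hpa.ne']; simp only [hxl]; ring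
        have hthalf : 1/2 ≤ t := by
          rw [htd, le_div_iff₀ hpa]
          calc 1/2 * π a = π a / 2 := by ring
          _ ≤ xl a := hxlhalf a
        have hlogd : Real.log (π a / xl a) = -Real.log t := by
          rw [htd, ← Real.log_inv, inv_div]
        have := lb_h_upper t hthalf
        have heq : 2*(t-1)^2 = 2 * l^2 * ((π a - π'' a)/π a)^2 := by rw [ht1]; ring
        rw [hlogd]
        linarith
      calc (1/η) * ∑ a, (Real.log (π a / xl a) + xl a / π a - 1)
          ≤ (1/η) * ∑ a, 2 * l^2 * ((π a - π'' a)/π a)^2 := by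
            apply mul_le_mul_of_nonneg_left hsum (by positivity)
        _ = l^2 * M := by
            rw [hM, hU, ← Finset.mul_sum]; ring
    have h4 : 0 ≤ D xl π + l * L := by linarith
    have h5 : l * (-(l*M)) ≤ l * L := by nlinarith
    exact le_of_mul_le_mul_left h5 hl0
  -- first order condition
  have hL0 : 0 ≤ L := by
    by_contra hcon
    push_neg at hcon
    have hM1 := hlam 1 one_pos le_rfl
    have hMpos : 0 < M := by nlinarith
    have hmpos : 0 < min 1 (-L/(2*M)) := lt_min one_pos (div_pos (by linarith) (by linarith))
    have hl := hlam _ hmpos (min_le_left _ _)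
    have h5 : min 1 (-L/(2*M)) ≤ -L/(2*M) := min_le_right _ _
    have h6 : (-L/(2*M))*M = -L/2 := by field_simp
    nlinarith
  -- s ≥ D π'' π
  have e2 : (∑ a, π'' a * (-(β₁ a))) - (∑ a, π a * (-(β₁ a)))
      + ∑ a, (π'' a - π a) * c a = L := by
    rw [hL, ← Finset.sum_sub_distrib, ← Finset.sum_add_distrib]
    exact Finset.sum_congr rfl fun a _ => by ring
  have tb := tpi π'' hπ''1
  have hG := hminG π hπ1 hπ2
  set s : ℝ := ∑ a, (π a - π'' a) * (β₁ a - β₂ a) with hs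
  have es : s = ((∑ a, π'' a * (-(β₁ a))) - (∑ a, π a * (-(β₁ a))))
      + ((∑ a, π a * (-(β₂ a))) - (∑ a, π'' a * (-(β₂ a)))) := by
    rw [hs, ← Finset.sum_sub_distrib, ← Finset.sum_sub_distrib, ← Finset.sum_add_distrib]
    exact Finset.sum_congr rfl fun a _ => by ring
  have hsD : D π'' π ≤ s := by linarith
  -- lower bound on D π'' π
  have hDlow : (1/(8*η)) * U ≤ D π'' π := by
    rw [hD]
    have hsum : ∑ a, (1/8) * ((π a - π'' a)/π a)^2
        ≤ ∑ a, (Real.log (π a / π'' a) + π'' a / π a - 1) := by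
      refine Finset.sum_le_sum fun a _ => ?_
      have hpa := hπ1 a
      have hppa := hπ''1 a
      set t : ℝ := π'' a / π a with htd
      have ht0 : 0 < t := by positivity
      have ht2 : t ≤ 2 := by
        rw [htd, div_le_iff₀ hpa]
        linarith [(hsand a).2]
      have ht1 : t - 1 = -((π a - π'' a)/π a) := by field_simp [htd]; rw [htd, sub_mul, div_mul_cancel₀ _ hpa.ne']; ring
      have hlogd : Real.log (π a / π'' a) = -Real.log t := by
        rw [htd, ← Real.log_inv, inv_div]
      have := lb_h_lower t ht0 ht2
      have heq : (t-1)^2 = ((π a - π'' a)/π a)^2 := by rw [ht1]; ring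
      rw [hlogd]
      linarith
    calc (1/(8*η)) * U = (1/η) * ∑ a, (1/8) * ((π a - π'' a)/π a)^2 := by
          rw [hU, ← Finset.mul_sum]; ring
      _ ≤ (1/η) * ∑ a, (Real.log (π a / π'' a) + π'' a / π a - 1) := by
          apply mul_le_mul_of_nonneg_left hsum (by positivity)
  -- Cauchy-Schwarz
  have hCS : s^2 ≤ U * V := by
    have h := Finset.sum_mul_sq_le_sq_mul_sq Finset.univ
      (fun a => (π a - π'' a)/π a) (fun a => π a * (β₁ a - β₂ a))
    have e3 : ∑ a, ((π a - π'' a)/π a) * (π a * (β₁ a - β₂ a)) = s := by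
      rw [hs]
      refine Finset.sum_congr rfl fun a _ => ?_
      have hpa := (hπ1 a).ne'
      field_simp
    have e4 : ∑ a, (π a * (β₁ a - β₂ a))^2 = V := by
      rw [hV]
      exact Finset.sum_congr rfl fun a _ => by ring
    rw [e3, e4] at h
    exact h
  -- finish
  have hU8 : U ≤ 8 * η * s := by
    have : (1/(8*η)) * U ≤ s := le_trans hDlow hsD
    calc U = 8 * η * ((1/(8*η)) * U) := by field_simp
      _ ≤ 8 * η * s := by nlinarith
  rcases le_or_gt s 0 with hle | hpos
  · have : 0 ≤ 8 * η * V := by positivity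
    linarith
  · have h7 : s * s ≤ (8 * η * V) * s := by nlinarith
    exact le_of_mul_le_mul_right h7 hpos
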